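/- Let S be a countably based Cu-semigroup satisfying O5, O6 and O7, let w ∈ S be idempotent, and let x, y ∈ S. Then x ≤ y + w if and only if x + (y ∧ w) ≤ y + (x ∧ w). -/
import Mathlib


open scoped ENNReal

namespace CuFormal

variable {S : Type*} [AddCommMonoid S] [PartialOrder S]

/-- The algebra-free way-below relation: `x ≪ y` iff whenever `y ≤ sup yₙ` for an
increasing sequence with supremum, then `x ≤ yₙ` for some `n`. -/
def WayBelow (x y : S) : Prop :=
  ∀ f : ℕ → S, Monotone f → ∀ s : S, IsLUB (Set.range f) s → y ≤ s → ∃ n, x ≤ f n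

/-- Positively ordered monoid with addition monotone. -/
def PosOrdered : Prop :=
  (∀ x : S, (0 : S) ≤ x) ∧ ∀ a b c : S, b ≤ c → a + b ≤ a + c

/-- O1: every increasing sequence has a supremum. -/
def AxO1 : Prop := ∀ f : ℕ → S, Monotone f → ∃ s : S, IsLUB (Set.range f) s

/-- O2: every element is the supremum of a ≪-increasing sequence. -/
def AxO2 : Prop := ∀ x : S, ∃ f : ℕ → S, Monotone f ∧
  (∀ n, WayBelow (f n) (f (n + 1))) ∧ IsLUB (Set.range f) x

/-- O3 -/
def AxO3 : Prop := ∀ x₁ y₁ x₂ y₂ : S,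
  WayBelow x₁ y₁ → WayBelow x₂ y₂ → WayBelow (x₁ + x₂) (y₁ + y₂)

/-- O4 -/
def AxO4 : Prop := ∀ f g : ℕ → S, Monotone f → Monotone g →
  ∀ a b : S, IsLUB (Set.range f) a → IsLUB (Set.range g) b →
    IsLUB (Set.range fun n => f n + g n) (a + b)

/-- A Cu-semigroup: positively ordered monoid satisfying O1–O4. -/
def CuSemigroup : Prop :=
  PosOrdered (S := S) ∧ AxO1 (S := S) ∧ AxO2 (S := S) ∧ AxO3 (S := S) ∧ AxO4 (S := S)

/-- O5 -/
def AxO5 : Prop := ∀ x' x y w' w : S, WayBelow x' x → x ≤ y → WayBelow w' w →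
  x + w ≤ y → ∃ z : S, x' + z ≤ y ∧ y ≤ x + z ∧ WayBelow w' z

/-- O6 -/
def AxO6 : Prop := ∀ x' x y z : S, WayBelow x' x → x ≤ y + z →
  ∃ y' z' : S, x' ≤ y' + z' ∧ y' ≤ x ∧ y' ≤ y ∧ z' ≤ x ∧ z' ≤ z

/-- O7 -/
def AxO7 : Prop := ∀ x₁' x₁ x₂' x₂ w : S,
  WayBelow x₁' x₁ → x₁ ≤ w → WayBelow x₂' x₂ → x₂ ≤ w →
  ∃ x : S, WayBelow x₁' x ∧ WayBelow x₂' x ∧ x ≤ w ∧ x ≤ x₁ + x₂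

/-- An ideal: a downward hereditary subsemigroup closed under suprema of increasing
sequences. -/
def IsIdeal (J : Set S) : Prop :=
  (0 : S) ∈ J ∧ (∀ x y : S, x ∈ J → y ∈ J → x + y ∈ J) ∧
  (∀ x y : S, y ∈ J → x ≤ y → x ∈ J) ∧
  (∀ f : ℕ → S, Monotone f → (∀ n, f n ∈ J) →
    ∀ s : S, IsLUB (Set.range f) s → s ∈ J)

/-- Countably based. -/
def CountablyBased : Prop := ∃ B : Set S, B.Countable ∧
  ∀ x : S, ∃ f : ℕ → S, (∀ n, f n ∈ B) ∧ Monotone f ∧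
    (∀ n, WayBelow (f n) (f (n + 1))) ∧ IsLUB (Set.range f) x

/-- A functional on `S`: preserves `0`, addition, order and suprema of increasing
sequences. -/
def IsFunctional (l : S → ℝ≥0∞) : Prop :=
  l 0 = 0 ∧ (∀ x y : S, l (x + y) = l x + l y) ∧ Monotone l ∧
  (∀ f : ℕ → S, Monotone f → ∀ s : S, IsLUB (Set.range f) s → l s = ⨆ n, l (f n))

/-- `(x̂ ∧ ŷ)(λ) = inf { λ₁(x) + λ₂(y) : λ = λ₁ + λ₂ }`. -/
noncomputable def hatInf (x y : S) (l : S → ℝ≥0∞) : ℝ≥0∞ :=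
  sInf {t : ℝ≥0∞ | ∃ l₁ l₂ : S → ℝ≥0∞, IsFunctional l₁ ∧ IsFunctional l₂ ∧
    (∀ u : S, l u = l₁ u + l₂ u) ∧ t = l₁ x + l₂ y}

/-- Edwards' condition for the functional `l`. -/
def EdwardsFor (l : S → ℝ≥0∞) : Prop := ∀ x y : S,
  hatInf x y l = sSup {t : ℝ≥0∞ | ∃ z : S, z ≤ x ∧ z ≤ y ∧ t = l z}

/-- The ideal generated by a subset. -/
def idealGen (X : Set S) : Set S := ⋂₀ {J : Set S | IsIdeal J ∧ X ⊆ J}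


/-- `x ≤ y + w` iff `x + (y ∧ w) ≤ y + (x ∧ w)` for idempotent `w`. -/
theorem stmt10 {S : Type*} [AddCommMonoid S] [PartialOrder S]
    (hCu : CuSemigroup (S := S)) (hcb : CountablyBased (S := S))
    (hO5 : AxO5 (S := S)) (hO6 : AxO6 (S := S)) (hO7 : AxO7 (S := S))
    (w : S) (hw : w + w = w) (x y : S)
    (xw yw : S) (hxw : IsGLB {x, w} xw) (hyw : IsGLB {y, w} yw) :
    x ≤ y + w ↔ x + yw ≤ y + xw := by
  obtain ⟨⟨hzero, haddR⟩, hO1, hO2, hO3, hO4⟩ := hCu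
  -- addition is monotone in both arguments
  have addle : ∀ a b c d : S, a ≤ b → c ≤ d → a + c ≤ b + d := by
    intro a b c d hab hcd
    calc a + c ≤ a + d := haddR a c d hcd
    _ = d + a := add_comm _ _
    _ ≤ d + b := haddR d a b hab
    _ = b + d := add_comm _ _
  have hxwx : xw ≤ x := hxw.1 (by simp)
  have hxww : xw ≤ w := hxw.1 (by simp)
  have hywy : yw ≤ y := hyw.1 (by simp)
  have hyww : yw ≤ w := hyw.1 (by simp)
  constructor
  · -- hard direction
    intro hxyw
    -- 0 ≪ 0
    have wb0 : WayBelow (0 : S) (0 : S) := by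
      intro f hf s hlub hs
      exact ⟨0, hzero _⟩
    obtain ⟨f, hfmono, hfwb, hflub⟩ := hO2 x
    obtain ⟨g, hgmono, hgwb, hglub⟩ := hO2 yw
    have hsum := hO4 f g hfmono hgmono x yw hflub hglub
    apply hsum.2
    rintro _ ⟨n, rfl⟩
    -- show f n + g n ≤ y + xw
    have hgn1 : g (n + 1) ≤ yw := hglub.1 ⟨n + 1, rfl⟩
    have hgn1y : g (n + 1) ≤ y := le_trans hgn1 hywy
    have hgn1w : g (n + 1) ≤ w := le_trans hgn1 hyww
    -- O5: split y
    obtain ⟨z, hz1, hz2, -⟩ :=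
      hO5 (g n) (g (n + 1)) y 0 0 (hgwb n) hgn1y wb0 (by rw [add_zero]; exact hgn1y)
    -- x ≤ z + w
    have hxzw : x ≤ z + w := by
      calc x ≤ y + w := hxyw
      _ ≤ (g (n + 1) + z) + w := addle _ _ _ _ hz2 le_rfl
      _ = z + (g (n + 1) + w) := by abel
      _ ≤ z + (w + w) := haddR _ _ _ (addle _ _ _ _ hgn1w le_rfl)
      _ = z + w := by rw [hw]
    have hfn1x : f (n + 1) ≤ x := hflub.1 ⟨n + 1, rfl⟩
    obtain ⟨y', z', hle, hy'1, hy'z, hz'1, hz'w⟩ :=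
      hO6 (f n) (f (n + 1)) z w (hfwb n) (le_trans hfn1x hxzw)
    have hz'xw : z' ≤ xw := by
      apply hxw.2
      rintro u (rfl | rfl)
      · exact le_trans hz'1 hfn1x
      · exact hz'w
    have hgny : g n ≤ g n := le_rfl
    calc f n + g n ≤ (y' + z') + g n := addle _ _ _ _ hle le_rfl
    _ ≤ (z + xw) + g n := addle _ _ _ _ (addle _ _ _ _ hy'z hz'xw) le_rfl
    _ = (g n + z) + xw := by abel
    _ ≤ y + xw := addle _ _ _ _ hz1 le_rfl
  · intro h
    calc x = x + 0 := (add_zero x).symm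
    _ ≤ x + yw := haddR _ _ _ (hzero yw)
    _ ≤ y + xw := h
    _ ≤ y + w := haddR _ _ _ hxww

end CuFormal
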